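/- Let ψ(x) = exp(κ(x−μ)²/(2σ²)) · D_{−ρ/κ}(−((x−μ)/σ)√(2κ)) where D_α(x) = (e^{−x²/4}/Γ(−α)) ∫₀^∞ t^{−α−1} e^{−t²/2 − xt} dt for α < 0. Then ψ is strictly positive, strictly increasing, strictly convex, and satisfies (σ²/2)ψ''(x) + κ(μ−x)ψ'(x) − ρψ(x) = 0 for all x ∈ ℝ. -/

import Mathlib

open Set

/-- Parabolic cylinder function `D_α(x)` for `α < 0` (integral representation). -/
noncomputable def Dcyl (α x : ℝ) : ℝ :=
  Real.exp (-x ^ 2 / 4) / Real.Gamma (-α) *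
    ∫ t in Ioi (0 : ℝ), t ^ (-α - 1) * Real.exp (-t ^ 2 / 2 - x * t)

/-- Increasing fundamental solution of `(σ²/2)u'' + κ(μ−x)u' − ρu = 0`. -/
noncomputable def psi (κ μ σ ρ : ℝ) (x : ℝ) : ℝ :=
  Real.exp (κ * (x - μ) ^ 2 / (2 * σ ^ 2)) *
    Dcyl (-(ρ / κ)) (-((x - μ) / σ) * Real.sqrt (2 * κ))

/-- Decreasing fundamental solution of `(σ²/2)u'' + κ(μ−x)u' − ρu = 0`. -/
noncomputable def phi (κ μ σ ρ : ℝ) (x : ℝ) : ℝ :=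
  Real.exp (κ * (x - μ) ^ 2 / (2 * σ ^ 2)) *
    Dcyl (-(ρ / κ)) (((x - μ) / σ) * Real.sqrt (2 * κ))

set_option maxHeartbeats 1000000

open Set MeasureTheory Real Filter Metric Topology

noncomputable def Jint (p a : ℝ) : ℝ :=
  ∫ t in Ioi (0:ℝ), t ^ p * Real.exp (-t ^ 2 / 2 + a * t)



lemma Jint_meas (p a : ℝ) :
    AEStronglyMeasurable (fun t : ℝ => t ^ p * Real.exp (-t ^ 2 / 2 + a * t))
      (volume.restrict (Ioi 0)) := by
  apply Measurable.aestronglyMeasurable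
  fun_prop

lemma exp_le_aux {a A t : ℝ} (hA : |a| ≤ A) (ht : 0 ≤ t) :
    Real.exp (-t ^ 2 / 2 + a * t) ≤ Real.exp (A ^ 2) * Real.exp (-(1/4) * t ^ 2) := by
  rw [← Real.exp_add]
  apply Real.exp_le_exp.2
  have h1 : a ≤ A := (abs_le.1 hA).2
  nlinarith [sq_nonneg (A - t/2), sq_nonneg t]

lemma Jint_integrable {p : ℝ} (hp : -1 < p) (a : ℝ) :
    IntegrableOn (fun t : ℝ => t ^ p * Real.exp (-t ^ 2 / 2 + a * t)) (Ioi 0) := by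
  have hmaj : IntegrableOn
      (fun t : ℝ => Real.exp (|a| ^ 2) * (t ^ p * Real.exp (-(1/4) * t ^ 2))) (Ioi 0) :=
    (integrableOn_rpow_mul_exp_neg_mul_sq (by norm_num : (0:ℝ) < 1/4) hp).const_mul _
  refine hmaj.integrable.mono' (Jint_meas p a) ?_
  filter_upwards [ae_restrict_mem measurableSet_Ioi] with t ht
  have ht' : (0:ℝ) ≤ t := le_of_lt ht
  have h0 : (0:ℝ) ≤ t ^ p := Real.rpow_nonneg ht' p
  rw [Real.norm_eq_abs, abs_of_nonneg (by positivity)]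
  calc t ^ p * Real.exp (-t ^ 2 / 2 + a * t)
      ≤ t ^ p * (Real.exp (|a| ^ 2) * Real.exp (-(1/4) * t ^ 2)) :=
        mul_le_mul_of_nonneg_left (exp_le_aux le_rfl ht') h0
    _ = Real.exp (|a| ^ 2) * (t ^ p * Real.exp (-(1/4) * t ^ 2)) := by ring






lemma Jint_pos {p : ℝ} (hp : -1 < p) (a : ℝ) : 0 < Jint p a := by
  rw [Jint, setIntegral_pos_iff_support_of_nonneg_ae]
  · refine lt_of_lt_of_le ?_ (measure_mono (s := Ioi (0:ℝ)) ?_)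
    · simp [Real.volume_Ioi]
    · intro t ht
      refine ⟨?_, ht⟩
      have : 0 < t ^ p * Real.exp (-t ^ 2 / 2 + a * t) :=
        mul_pos (Real.rpow_pos_of_pos ht p) (Real.exp_pos _)
      exact Function.mem_support.2 this.ne'
  · filter_upwards [ae_restrict_mem measurableSet_Ioi] with t ht
    exact le_of_lt (mul_pos (Real.rpow_pos_of_pos ht p) (Real.exp_pos _))
  · exact Jint_integrable hp a

lemma hasDerivAt_inner (p t : ℝ) (ht : 0 < t) (x : ℝ) :
    HasDerivAt (fun y : ℝ => t ^ p * Real.exp (-t ^ 2 / 2 + y * t))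
      (t ^ (p + 1) * Real.exp (-t ^ 2 / 2 + x * t)) x := by
  have h1 : HasDerivAt (fun y : ℝ => -t ^ 2 / 2 + y * t) t x := by
    simpa using (hasDerivAt_mul_const t).const_add (-t ^ 2 / 2)
  have h2 := (h1.exp).const_mul (t ^ p)
  refine h2.congr_deriv ?_
  rw [Real.rpow_add_one ht.ne']
  ring

lemma hasDerivAt_Jint {p : ℝ} (hp : -1 < p) (a : ℝ) :
    HasDerivAt (Jint p) (Jint (p + 1) a) a := by
  have key := hasDerivAt_integral_of_dominated_loc_of_deriv_le
    (F := fun x t => t ^ p * Real.exp (-t ^ 2 / 2 + x * t))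
    (F' := fun x t => t ^ (p + 1) * Real.exp (-t ^ 2 / 2 + x * t))
    (bound := fun t => Real.exp ((|a| + 1) ^ 2) * (t ^ (p + 1) * Real.exp (-(1/4) * t ^ 2)))
    (μ := volume.restrict (Ioi 0)) (x₀ := a) (ball_mem_nhds a one_pos)
    (Eventually.of_forall fun x => Jint_meas p x) (Jint_integrable hp a)
    (Jint_meas (p + 1) a) ?_ ?_ ?_
  · exact key.2
  · filter_upwards [ae_restrict_mem measurableSet_Ioi] with t ht x hx
    have ht' : (0:ℝ) ≤ t := le_of_lt ht
    rw [Real.norm_eq_abs, abs_of_nonneg (by positivity)]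
    have hxA : |x| ≤ |a| + 1 := by
      have := mem_ball_iff_norm.1 hx
      rw [Real.norm_eq_abs] at this
      calc |x| = |x - a + a| := by ring_nf
        _ ≤ |x - a| + |a| := abs_add_le _ _
        _ ≤ |a| + 1 := by linarith
    calc t ^ (p+1) * Real.exp (-t ^ 2 / 2 + x * t)
        ≤ t ^ (p+1) * (Real.exp ((|a|+1) ^ 2) * Real.exp (-(1/4) * t ^ 2)) :=
          mul_le_mul_of_nonneg_left (exp_le_aux hxA ht') (Real.rpow_nonneg ht' _)
      _ = Real.exp ((|a|+1) ^ 2) * (t ^ (p+1) * Real.exp (-(1/4) * t ^ 2)) := by ring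
  · exact ((integrableOn_rpow_mul_exp_neg_mul_sq (by norm_num : (0:ℝ) < 1/4)
      (by linarith)).const_mul _)
  · filter_upwards [ae_restrict_mem measurableSet_Ioi] with t ht x _
    exact hasDerivAt_inner p t ht x





lemma tendsto_aux (β a : ℝ) :
    Tendsto (fun t : ℝ => t ^ β * Real.exp (-t ^ 2 / 2 + a * t)) atTop (𝓝 0) := by
  have h1 : Tendsto (fun t : ℝ => Real.exp (|a| ^ 2) * (t ^ β * Real.exp (-(1/4) * t ^ 2)))
      atTop (𝓝 0) := by
    have hg : Tendsto (fun x : ℝ => Real.exp (-(1/2) * x)) atTop (𝓝 0) := by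
      have := Real.tendsto_exp_neg_atTop_nhds_zero.comp
        (Tendsto.const_mul_atTop (by norm_num : (0:ℝ) < 1/2) (tendsto_id (α := ℝ)))
      refine this.congr fun x => ?_
      simp [neg_mul, Function.comp]
    have h2 := (rpow_mul_exp_neg_mul_sq_isLittleO_exp_neg
      (by norm_num : (0:ℝ) < 1/4) β).tendsto_zero_of_tendsto hg
    have h3 := (tendsto_const_nhds (x := Real.exp (|a| ^ 2)) (f := atTop (α := ℝ))).mul h2
    simpa using h3
  refine tendsto_of_tendsto_of_tendsto_of_le_of_le' tendsto_const_nhds h1 ?_ ?_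
  · filter_upwards [eventually_ge_atTop (0:ℝ)] with t ht
    positivity
  · filter_upwards [eventually_ge_atTop (0:ℝ)] with t ht
    calc t ^ β * Real.exp (-t ^ 2 / 2 + a * t)
        ≤ t ^ β * (Real.exp (|a| ^ 2) * Real.exp (-(1/4) * t ^ 2)) :=
          mul_le_mul_of_nonneg_left (exp_le_aux le_rfl ht) (Real.rpow_nonneg ht _)
      _ = Real.exp (|a| ^ 2) * (t ^ β * Real.exp (-(1/4) * t ^ 2)) := by ring

lemma Jint_ibp {β : ℝ} (hβ : 0 < β) (a : ℝ) :
    Jint (β + 1) a = a * Jint β a + β * Jint (β - 1) a := by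
  have hβ1 : (-1:ℝ) < β - 1 := by linarith
  have hβ2 : (-1:ℝ) < β := by linarith
  have hβ3 : (-1:ℝ) < β + 1 := by linarith
  set F : ℝ → ℝ := fun t => t ^ β * Real.exp (-t ^ 2 / 2 + a * t) with hF
  set G : ℝ → ℝ := fun t => β * (t ^ (β - 1) * Real.exp (-t ^ 2 / 2 + a * t))
      + a * (t ^ β * Real.exp (-t ^ 2 / 2 + a * t))
      - t ^ (β + 1) * Real.exp (-t ^ 2 / 2 + a * t) with hG
  have hderiv : ∀ t ∈ Ioi (0:ℝ), HasDerivAt F (G t) t := by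
    intro t ht
    have ht : (0:ℝ) < t := ht
    have h1 : HasDerivAt (fun t : ℝ => t ^ β) (β * t ^ (β - 1)) t :=
      Real.hasDerivAt_rpow_const (Or.inl ht.ne')
    have h2 : HasDerivAt (fun t : ℝ => -t ^ 2 / 2 + a * t) (-t + a) t := by
      have h := (((hasDerivAt_pow 2 t).neg.div_const 2).add ((hasDerivAt_id t).const_mul a))
      refine h.congr_deriv ?_
      norm_num
      ring
    have h3 := h1.mul h2.exp
    refine h3.congr_deriv ?_
    rw [hG]
    simp only
    rw [Real.rpow_add_one ht.ne']
    ring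
  have hGint : IntegrableOn G (Ioi 0) :=
    (((Jint_integrable hβ1 a).const_mul β).add ((Jint_integrable hβ2 a).const_mul a)).sub
      (Jint_integrable hβ3 a)
  have hcont : ContinuousWithinAt F (Ici 0) 0 := by
    apply ContinuousAt.continuousWithinAt
    exact (Real.continuousAt_rpow_const 0 β (Or.inr hβ.le)).mul
      ((Real.continuous_exp.comp (by continuity)).continuousAt)
  have hF0 : F 0 = 0 := by
    simp [hF, Real.zero_rpow hβ.ne']
  have key : ∫ t in Ioi (0:ℝ), G t = 0 - F 0 :=
    integral_Ioi_of_hasDerivAt_of_tendsto hcont hderiv hGint (tendsto_aux β a)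
  rw [hF0, sub_zero] at key
  have i1 := (Jint_integrable hβ1 a).const_mul β
  have i2 := (Jint_integrable hβ2 a).const_mul a
  have i3 := Jint_integrable hβ3 a
  have i12 : IntegrableOn (fun t : ℝ => β * (t ^ (β - 1) * Real.exp (-t ^ 2 / 2 + a * t))
      + a * (t ^ β * Real.exp (-t ^ 2 / 2 + a * t))) (Ioi 0) := i1.add i2
  have hsplit : ∫ t in Ioi (0:ℝ), G t
      = β * Jint (β - 1) a + a * Jint β a - Jint (β + 1) a := by
    rw [hG, Jint, Jint, Jint]
    rw [integral_sub i12 i3, integral_add i1 i2, integral_const_mul, integral_const_mul]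
  rw [hsplit] at key
  linarith










lemma psi_eq {κ σ : ℝ} (ρ μ : ℝ) (hκ : 0 < κ) (hσ : 0 < σ) (x : ℝ) :
    psi κ μ σ ρ x = (1 / Real.Gamma (ρ / κ)) *
      Jint (ρ / κ - 1) (Real.sqrt (2 * κ) / σ * (x - μ)) := by
  have hs : Real.sqrt (2 * κ) ^ 2 = 2 * κ := Real.sq_sqrt (by positivity)
  rw [psi, Dcyl, neg_neg, Jint]
  have hint : ∀ t : ℝ,
      t ^ (ρ / κ - 1) * Real.exp (-t ^ 2 / 2 - (-((x - μ) / σ) * Real.sqrt (2 * κ)) * t)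
      = t ^ (ρ / κ - 1) * Real.exp (-t ^ 2 / 2 + Real.sqrt (2 * κ) / σ * (x - μ) * t) := by
    intro t
    congr 2
    field_simp
    ring
  rw [show (∫ t in Ioi (0:ℝ),
      t ^ (ρ / κ - 1) * Real.exp (-t ^ 2 / 2 - (-((x - μ) / σ) * Real.sqrt (2 * κ)) * t))
      = ∫ t in Ioi (0:ℝ),
      t ^ (ρ / κ - 1) * Real.exp (-t ^ 2 / 2 + Real.sqrt (2 * κ) / σ * (x - μ) * t) from
    integral_congr_ae (Eventually.of_forall fun t => hint t)]
  have hB : -(-((x - μ) / σ) * Real.sqrt (2 * κ)) ^ 2 / 4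
      = -(κ * (x - μ) ^ 2 / (2 * σ ^ 2)) := by
    have h2 : (-((x - μ) / σ) * Real.sqrt (2 * κ)) ^ 2 = ((x - μ) / σ) ^ 2 * (2 * κ) := by
      rw [mul_pow, neg_pow, hs]; ring
    rw [h2]
    field_simp
    ring
  rw [← mul_assoc, hB, Real.exp_neg]
  have hexp : Real.exp (κ * (x - μ) ^ 2 / (2 * σ ^ 2)) ≠ 0 := Real.exp_ne_zero _
  congr 1
  have generic : ∀ (e G : ℝ), e ≠ 0 → e * (e⁻¹ / G) = 1 / G := by
    intro e G he
    field_simp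
  exact generic _ _ hexp


/-- `ψ` is strictly positive, strictly increasing, strictly convex, and solves
`(σ²/2)ψ'' + κ(μ−x)ψ' − ρψ = 0`. -/
theorem stmt6 (κ σ ρ μ : ℝ) (hκ : 0 < κ) (hσ : 0 < σ) (hρ : 0 < ρ) :
    (∀ x : ℝ, 0 < psi κ μ σ ρ x) ∧
      StrictMono (psi κ μ σ ρ) ∧
      StrictConvexOn ℝ Set.univ (psi κ μ σ ρ) ∧
      ∀ x : ℝ,
        σ ^ 2 / 2 * iteratedDeriv 2 (psi κ μ σ ρ) x
          + κ * (μ - x) * deriv (psi κ μ σ ρ) x - ρ * psi κ μ σ ρ x = 0 := by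
  set β := ρ / κ with hβdef
  set b := Real.sqrt (2 * κ) / σ with hbdef
  set c := 1 / Real.Gamma β with hcdef
  have hβ : 0 < β := div_pos hρ hκ
  have hb : 0 < b := div_pos (Real.sqrt_pos.2 (by positivity)) hσ
  have hc : 0 < c := by
    rw [hcdef]
    exact div_pos one_pos (Real.Gamma_pos_of_pos hβ)
  have hβ1 : (-1:ℝ) < β - 1 := by linarith
  have hβ2 : (-1:ℝ) < β := by linarith
  have hψ : psi κ μ σ ρ = fun x => c * Jint (β - 1) (b * (x - μ)) :=
    funext fun x => psi_eq ρ μ hκ hσ x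
  -- first derivative
  have hD1 : ∀ x : ℝ, HasDerivAt (psi κ μ σ ρ) (c * b * Jint β (b * (x - μ))) x := by
    intro x
    rw [hψ]
    have hinner : HasDerivAt (fun y : ℝ => b * (y - μ)) b x := by
      simpa using ((hasDerivAt_id x).sub_const μ).const_mul b
    have houter := hasDerivAt_Jint hβ1 (b * (x - μ))
    rw [sub_add_cancel] at houter
    have := (houter.comp x hinner).const_mul c
    refine this.congr_deriv ?_
    ring
  have hd1 : deriv (psi κ μ σ ρ) = fun x => c * b * Jint β (b * (x - μ)) :=
    funext fun x => (hD1 x).deriv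
  -- second derivative
  have hD2 : ∀ x : ℝ, HasDerivAt (deriv (psi κ μ σ ρ)) (c * b * b * Jint (β + 1) (b * (x - μ))) x := by
    intro x
    rw [hd1]
    have hinner : HasDerivAt (fun y : ℝ => b * (y - μ)) b x := by
      simpa using ((hasDerivAt_id x).sub_const μ).const_mul b
    have houter := hasDerivAt_Jint hβ2 (b * (x - μ))
    have := (houter.comp x hinner).const_mul (c * b)
    refine this.congr_deriv ?_
    ring
  have hd2 : deriv (deriv (psi κ μ σ ρ)) = fun x => c * b * b * Jint (β + 1) (b * (x - μ)) :=
    funext fun x => (hD2 x).deriv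
  refine ⟨?_, ?_, ?_, ?_⟩
  · intro x
    rw [hψ]
    exact mul_pos hc (Jint_pos hβ1 _)
  · apply strictMono_of_deriv_pos
    intro x
    rw [hd1]
    exact mul_pos (mul_pos hc hb) (Jint_pos hβ2 _)
  · refine strictConvexOn_of_deriv2_pos convex_univ ?_ ?_
    · exact fun x _ => ((hD1 x).continuousAt).continuousWithinAt
    · intro x _
      have : deriv^[2] (psi κ μ σ ρ) = deriv (deriv (psi κ μ σ ρ)) := rfl
      rw [this, hd2]
      exact mul_pos (mul_pos (mul_pos hc hb) hb) (Jint_pos (by linarith) _)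
  · intro x
    have h2 : iteratedDeriv 2 (psi κ μ σ ρ) x = c * b * b * Jint (β + 1) (b * (x - μ)) := by
      rw [show (2:ℕ) = 1 + 1 from rfl, iteratedDeriv_succ, iteratedDeriv_one, hd2]
    rw [h2, hd1, hψ]
    simp only
    rw [Jint_ibp hβ (b * (x - μ))]
    have hss : Real.sqrt (2 * κ) * Real.sqrt (2 * κ) = 2 * κ :=
      Real.mul_self_sqrt (by positivity)
    have hbb : b * b = (2 * κ) / σ ^ 2 := by
      rw [hbdef, div_mul_div_comm, hss, sq]
    have hb2 : σ ^ 2 * (b * b) = 2 * κ := by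
      rw [hbb, mul_comm, div_mul_cancel₀ _ (ne_of_gt (pow_pos hσ 2))]
    have hρκ : ρ = κ * β := by
      rw [hβdef]; field_simp
    set J0 := Jint (β - 1) (b * (x - μ))
    set J1 := Jint β (b * (x - μ))
    linear_combination (c * (b * (x - μ) * J1 + β * J0) / 2) * hb2 + (-(c * J0)) * hρκ
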